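/- Let H be a complex separable Hilbert space, T a bounded operator on H, m ∈ ℕ, and (v_i)_{i∈Fin m} a finite family in H such that {Tⁿ v_i : i ∈ Fin m, n ≥ 0} is a Parseval frame of H. Then the closure of the range of I − T T* is a finite-dimensional subspace of H of dimension at most m. -/

import Mathlib

open scoped ComplexInnerProductSpace

/-- If `{Tⁿ vᵢ : i ∈ Fin m, n ≥ 0}` is a Parseval frame of `H`,
then the closure of the range of `I − T T*` (the defect space) is finite-dimensional
of dimension at most `m`. -/
theorem defect_space_findim_of_finite_parseval_frame
    (H : Type*) [NormedAddCommGroup H] [InnerProductSpace ℂ H]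
    [CompleteSpace H] [TopologicalSpace.SeparableSpace H]
    (T : H →L[ℂ] H) (m : ℕ) (v : Fin m → H)
    (hParseval : ∀ x : H, ∑' p : Fin m × ℕ, ‖⟪x, (T ^ p.2) (v p.1)⟫‖ ^ 2 = ‖x‖ ^ 2) :
    FiniteDimensional ℂ
        ((LinearMap.range ((1 - T * ContinuousLinearMap.adjoint T : H →L[ℂ] H) : H →ₗ[ℂ] H)).topologicalClosure) ∧
      Module.finrank ℂ
        ((LinearMap.range ((1 - T * ContinuousLinearMap.adjoint T : H →L[ℂ] H) : H →ₗ[ℂ] H)).topologicalClosure) ≤ m := by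
  classical
  set S := ContinuousLinearMap.adjoint T with hS
  -- summability of the frame coefficients
  have hsum : ∀ x : H, Summable (fun p : Fin m × ℕ => ‖⟪x, (T ^ p.2) (v p.1)⟫‖ ^ 2) := by
    intro x
    by_cases hx : x = 0
    · simp [hx, summable_zero]
    · by_contra h
      have h0 := tsum_eq_zero_of_not_summable h
      rw [hParseval x] at h0
      exact hx (norm_eq_zero.mp (pow_eq_zero_iff two_ne_zero |>.mp h0))
  -- key scalar identity : ‖x‖² = ∑ᵢ ‖⟪x, vᵢ⟫‖² + ‖T* x‖²
  have key : ∀ x : H, ‖x‖ ^ 2 = (∑ i : Fin m, ‖⟪x, v i⟫‖ ^ 2) + ‖S x‖ ^ 2 := by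
    intro x
    have hfx := hsum x
    have h1 : ∑' p : Fin m × ℕ, ‖⟪x, (T ^ p.2) (v p.1)⟫‖ ^ 2
        = ∑' (i : Fin m) (n : ℕ), ‖⟪x, (T ^ n) (v i)⟫‖ ^ 2 :=
      Summable.tsum_prod' hfx (fun i => hfx.prod_factor i)
    have h2 : ∀ i : Fin m, ∑' n : ℕ, ‖⟪x, (T ^ n) (v i)⟫‖ ^ 2
        = ‖⟪x, v i⟫‖ ^ 2 + ∑' n : ℕ, ‖⟪S x, (T ^ n) (v i)⟫‖ ^ 2 := by
      intro i
      rw [Summable.tsum_eq_zero_add (hfx.prod_factor i)]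
      have heq : ∀ n : ℕ, ‖⟪S x, (T ^ n) (v i)⟫‖ ^ 2 = ‖⟪x, (T ^ (n + 1)) (v i)⟫‖ ^ 2 := by
        intro n
        have hp : (T ^ (n + 1)) (v i) = T ((T ^ n) (v i)) := by
          rw [pow_succ' T n]; rfl
        rw [hS, ContinuousLinearMap.adjoint_inner_left, hp]
      simp only [pow_zero, ContinuousLinearMap.one_apply]
      congr 1
      exact (tsum_congr heq).symm
    have h3 : (∑ i : Fin m, ∑' n : ℕ, ‖⟪S x, (T ^ n) (v i)⟫‖ ^ 2) = ‖S x‖ ^ 2 := by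
      rw [← tsum_fintype (L := SummationFilter.unconditional (Fin m)), ← Summable.tsum_prod' (hsum (S x)) (fun i => (hsum (S x)).prod_factor i)]
      exact hParseval (S x)
    calc ‖x‖ ^ 2 = ∑' p : Fin m × ℕ, ‖⟪x, (T ^ p.2) (v p.1)⟫‖ ^ 2 := (hParseval x).symm
      _ = ∑' (i : Fin m) (n : ℕ), ‖⟪x, (T ^ n) (v i)⟫‖ ^ 2 := h1
      _ = ∑ i : Fin m, ∑' n : ℕ, ‖⟪x, (T ^ n) (v i)⟫‖ ^ 2 := tsum_fintype _
      _ = ∑ i : Fin m, (‖⟪x, v i⟫‖ ^ 2 + ∑' n : ℕ, ‖⟪S x, (T ^ n) (v i)⟫‖ ^ 2) :=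
          Finset.sum_congr rfl fun i _ => h2 i
      _ = (∑ i : Fin m, ‖⟪x, v i⟫‖ ^ 2) + ‖S x‖ ^ 2 := by
          rw [Finset.sum_add_distrib, h3]
  -- the "gram" operator B x = ∑ᵢ ⟪vᵢ, x⟫ • vᵢ
  let B : H →ₗ[ℂ] H :=
    { toFun := fun x => ∑ i : Fin m, ⟪v i, x⟫ • v i
      map_add' := by intro x y; simp [inner_add_right, add_smul, Finset.sum_add_distrib]
      map_smul' := by intro c x; simp [inner_smul_right, smul_smul, Finset.smul_sum] }
  -- D := (1 - T T*) - B has vanishing quadratic form, hence is zero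
  have hDB : ∀ x : H, (1 - T * S) x = B x := by
    have hzero : ((1 - T * S : H →L[ℂ] H) : H →ₗ[ℂ] H) - B = 0 := by
      rw [← inner_map_self_eq_zero]
      intro x
      have hq : ⟪(((1 - T * S : H →L[ℂ] H) : H →ₗ[ℂ] H) - B) x, x⟫
          = ((‖x‖ ^ 2 : ℝ) : ℂ) - ((‖S x‖ ^ 2 : ℝ) : ℂ)
            - ∑ i : Fin m, ((‖⟪x, v i⟫‖ ^ 2 : ℝ) : ℂ) := by
        simp only [LinearMap.sub_apply, ContinuousLinearMap.coe_coe,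
          ContinuousLinearMap.sub_apply, ContinuousLinearMap.one_apply,
          ContinuousLinearMap.mul_apply, inner_sub_left, B, LinearMap.coe_mk,
          AddHom.coe_mk, sum_inner, inner_smul_left]
        have e1 : ⟪x, x⟫ = ((‖x‖ ^ 2 : ℝ) : ℂ) := by
          rw [inner_self_eq_norm_sq_to_K]; norm_cast
        have e2 : ⟪T (S x), x⟫ = ((‖S x‖ ^ 2 : ℝ) : ℂ) := by
          rw [hS, ← ContinuousLinearMap.adjoint_inner_right, ← hS,
            inner_self_eq_norm_sq_to_K]
          norm_cast
        have e3 : ∀ i : Fin m, (starRingEnd ℂ) ⟪v i, x⟫ * ⟪v i, x⟫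
            = ((‖⟪x, v i⟫‖ ^ 2 : ℝ) : ℂ) := by
          intro i
          have hz : ⟪v i, x⟫ = (starRingEnd ℂ) ⟪x, v i⟫ := (inner_conj_symm (v i) x).symm
          rw [hz, Complex.conj_conj, Complex.mul_conj, Complex.normSq_eq_norm_sq]
        rw [e1, e2]
        rw [Finset.sum_congr rfl fun i _ => e3 i]
      rw [hq, key x]
      push_cast
      ring
    intro x
    have h4 := LinearMap.congr_fun hzero x
    simp only [LinearMap.sub_apply, LinearMap.zero_apply, sub_eq_zero,
      ContinuousLinearMap.coe_coe] at h4
    exact h4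
  -- hence the range is contained in the span of the vᵢ
  have hle : LinearMap.range ((1 - T * S : H →L[ℂ] H) : H →ₗ[ℂ] H) ≤ Submodule.span ℂ (Set.range v) := by
    rintro y ⟨x, rfl⟩
    rw [ContinuousLinearMap.coe_coe, hDB x]
    simp only [B, LinearMap.coe_mk, AddHom.coe_mk]
    exact Submodule.sum_mem _ fun i _ =>
      Submodule.smul_mem _ _ (Submodule.subset_span (Set.mem_range_self i))
  haveI : FiniteDimensional ℂ (Submodule.span ℂ (Set.range v)) :=
    FiniteDimensional.span_of_finite ℂ (Set.finite_range v)
  have hclosed : IsClosed (Submodule.span ℂ (Set.range v) : Set H) :=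
    Submodule.closed_of_finiteDimensional _
  have hle' : (LinearMap.range ((1 - T * S : H →L[ℂ] H) : H →ₗ[ℂ] H)).topologicalClosure
      ≤ Submodule.span ℂ (Set.range v) :=
    Submodule.topologicalClosure_minimal _ hle hclosed
  haveI : FiniteDimensional ℂ
      ((LinearMap.range ((1 - T * S : H →L[ℂ] H) : H →ₗ[ℂ] H)).topologicalClosure) :=
    Submodule.finiteDimensional_of_le hle'
  refine ⟨inferInstance, ?_⟩
  calc Module.finrank ℂ ((LinearMap.range ((1 - T * S : H →L[ℂ] H) : H →ₗ[ℂ] H)).topologicalClosure)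
      ≤ Module.finrank ℂ (Submodule.span ℂ (Set.range v)) := Submodule.finrank_mono hle'
    _ ≤ Fintype.card (Fin m) := finrank_range_le_card v
    _ = m := Fintype.card_fin m
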